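/- Let 𝔗 be a 2×2 complex matrix with Pauli decomposition 𝔗 = Σγⱼσⱼ, and let k ∈ ℂ satisfy p(k) := 4(1+ik)² det 𝔗 − 4(1+ik)γ₀ + 1 ≠ 0. Then the S-matrix S(k) := (σ₀ − 2(1−ik)𝔗)(σ₀ − 2(1+ik)𝔗)⁻¹ equals σ₀ + 4ik(𝔗 − 2(1+ik)(det 𝔗)σ₀)/p(k). -/

import Mathlib

open Matrix Complex

noncomputable def σ₀ : Matrix (Fin 2) (Fin 2) ℂ := 1
noncomputable def σ₁ : Matrix (Fin 2) (Fin 2) ℂ := !![0, 1; 1, 0]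
noncomputable def σ₂ : Matrix (Fin 2) (Fin 2) ℂ := !![0, -I; I, 0]
noncomputable def σ₃ : Matrix (Fin 2) (Fin 2) ℂ := !![1, 0; 0, -1]

set_option maxHeartbeats 1000000 in
theorem aux (a b c d k p : ℂ) (htr : a + d = p)
    (hp : 4 * (1 + I * k) ^ 2 * (!![a,b;c,d] : Matrix (Fin 2) (Fin 2) ℂ).det
      - 2 * (1 + I * k) * p + 1 ≠ 0) :
    ((1 : Matrix (Fin 2) (Fin 2) ℂ) - (2 * (1 - I * k)) • !![a,b;c,d]) *
      ((1 : Matrix (Fin 2) (Fin 2) ℂ) - (2 * (1 + I * k)) • !![a,b;c,d])⁻¹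
      = 1 + ((4 * I * k) / (4 * (1 + I * k) ^ 2 * (!![a,b;c,d] : Matrix (Fin 2) (Fin 2) ℂ).det
            - 2 * (1 + I * k) * p + 1)) •
          (!![a,b;c,d] - (2 * (1 + I * k) * (!![a,b;c,d] : Matrix (Fin 2) (Fin 2) ℂ).det) • 1) := by
  subst htr
  simp only [Matrix.det_fin_two_of] at *
  have hB : ((1 : Matrix (Fin 2) (Fin 2) ℂ) - (2 * (1 + I * k)) • !![a,b;c,d]).det
      = 4 * (1 + I * k) ^ 2 * (a * d - b * c) - 2 * (1 + I * k) * (a + d) + 1 := by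
    simp [Matrix.det_fin_two, Matrix.one_fin_two]
    ring
  have hu : IsUnit ((1 : Matrix (Fin 2) (Fin 2) ℂ) - (2 * (1 + I * k)) • !![a,b;c,d]).det := by
    rw [hB]; exact isUnit_iff_ne_zero.mpr hp
  haveI := Matrix.invertibleOfIsUnitDet _ hu
  rw [Matrix.mul_inv_eq_iff_eq_mul_of_invertible]
  rw [div_eq_mul_inv]
  set e := (4 * (1 + I * k) ^ 2 * (a * d - b * c) - 2 * (1 + I * k) * (a + d) + 1)⁻¹ with he
  have hDe : (4 * (1 + I * k) ^ 2 * (a * d - b * c) - 2 * (1 + I * k) * (a + d) + 1) * e = 1 :=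
    mul_inv_cancel₀ hp
  ext i j
  fin_cases i <;> fin_cases j <;>
    simp [Matrix.mul_apply, Fin.sum_univ_two, Matrix.one_fin_two]
  · linear_combination (-4 * I * k * a) * hDe
  · linear_combination (-4 * I * k * b) * hDe
  · linear_combination (-4 * I * k * c) * hDe
  · linear_combination (-4 * I * k * d) * hDe

theorem S_matrix_formula (γ₀ γ₁ γ₂ γ₃ k : ℂ)
    (𝔗 : Matrix (Fin 2) (Fin 2) ℂ)
    (h𝔗 : 𝔗 = γ₀ • σ₀ + γ₁ • σ₁ + γ₂ • σ₂ + γ₃ • σ₃)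
    (hp : 4 * (1 + I * k) ^ 2 * 𝔗.det - 4 * (1 + I * k) * γ₀ + 1 ≠ 0) :
    (σ₀ - (2 * (1 - I * k)) • 𝔗) * (σ₀ - (2 * (1 + I * k)) • 𝔗)⁻¹
      = σ₀ + ((4 * I * k) / (4 * (1 + I * k) ^ 2 * 𝔗.det - 4 * (1 + I * k) * γ₀ + 1)) •
          (𝔗 - (2 * (1 + I * k) * 𝔗.det) • σ₀) := by
  have hT : 𝔗 = !![γ₀ + γ₃, γ₁ - γ₂ * I; γ₁ + γ₂ * I, γ₀ - γ₃] := by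
    rw [h𝔗]
    simp only [σ₀, σ₁, σ₂, σ₃, Matrix.one_fin_two]
    ext i j
    fin_cases i <;> fin_cases j <;> simp <;> ring
  have h2 : 4 * (1 + I * k) * γ₀ = 2 * (1 + I * k) * (2 * γ₀) := by ring
  subst hT
  simp only [σ₀]
  rw [h2] at hp ⊢
  exact aux _ _ _ _ k (2 * γ₀) (by ring) hp
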